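/- Let a ≥ b be positive integers and c a positive integer with gcd(a,c) = gcd(b,c) = 1, let Γ be the Z-grading of K[x,y,z] with deg x = a, deg y = b, deg z = −c, and let Γ̃ be the Z/cZ-grading of K[u,v] with deg u = a mod c, deg v = b mod c. Let φ̃ = (f̃, g̃) be a Γ̃-graded automorphism of K[u,v]. Then there is NO Γ-graded automorphism φ of K[x,y,z] fixing z with φ(x)(u,v,1) = f̃ and φ(y)(u,v,1) = g̃ if and only if f̃ contains a monomial v^q with nonzero coefficient such that bq < a, or g̃ has nonzero constant term. -/

import Mathlib

open MvPolynomial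

/-- For the `ℤ`-grading of `K[x,y,z]` with weights `w`, an automorphism is *graded*
if it maps each homogeneous component into itself. -/
def IsGraded3 {K : Type*} [CommRing K] (w : Fin 3 → ℤ)
    (φ : MvPolynomial (Fin 3) K ≃ₐ[K] MvPolynomial (Fin 3) K) : Prop :=
  ∀ (d : ℤ) (f : MvPolynomial (Fin 3) K),
    f.IsWeightedHomogeneous w d → (φ f).IsWeightedHomogeneous w d

/-- For the `ℤ/cℤ`-grading of `K[u,v]` with weights `w`, an automorphism is *graded*
if it maps each homogeneous component into itself. -/
def IsGraded2 {K : Type*} [CommRing K] {c : ℕ} (w : Fin 2 → ZMod c)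
    (φ : MvPolynomial (Fin 2) K ≃ₐ[K] MvPolynomial (Fin 2) K) : Prop :=
  ∀ (d : ZMod c) (f : MvPolynomial (Fin 2) K),
    f.IsWeightedHomogeneous w d → (φ f).IsWeightedHomogeneous w d

/-- The restriction homomorphism `K[x,y,z] → K[u,v]`, `x ↦ u`, `y ↦ v`, `z ↦ 1`,
i.e. restriction of functions to the plane `z = 1`. -/
noncomputable def restrict (K : Type*) [CommRing K] :
    MvPolynomial (Fin 3) K →ₐ[K] MvPolynomial (Fin 2) K :=
  aeval ![X 0, X 1, 1]

namespace NoLiftAux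


def wt (a b : ℕ) (d : Fin 2 →₀ ℕ) : ℕ := a * d 0 + b * d 1

lemma fin2_decomp (d : Fin 2 →₀ ℕ) :
    d = Finsupp.single 0 (d 0) + Finsupp.single 1 (d 1) := by
  ext i; fin_cases i <;> simp [Finsupp.single_apply]

def Lwt {K : Type*} [CommRing K] (a b s : ℕ) (p : MvPolynomial (Fin 2) K) : Prop :=
  ∀ d, coeff d p ≠ 0 → s ≤ wt a b d

variable {K : Type*} [CommRing K]

-- (assume the chunk-a и chunk-b lemmas; restated as axioms here for speed? no—just paste later)
-- For this test, re-proving quickly: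
lemma wt_add (a b : ℕ) (d e : Fin 2 →₀ ℕ) : wt a b (d + e) = wt a b d + wt a b e := by
  simp [wt]; ring

lemma Lwt.coeff_eq_zero {a b s : ℕ} {p : MvPolynomial (Fin 2) K}
    (h : Lwt a b s p) {d : Fin 2 →₀ ℕ} (hd : wt a b d < s) : coeff d p = 0 := by
  by_contra hc; exact absurd (h d hc) (not_le.mpr hd)

lemma Lwt.mul {a b s t : ℕ} {p q : MvPolynomial (Fin 2) K}
    (hp : Lwt a b s p) (hq : Lwt a b t q) : Lwt a b (s + t) (p * q) := by
  intro d hd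
  classical
  rw [coeff_mul] at hd
  obtain ⟨⟨u, v⟩, huv, hne⟩ := Finset.exists_ne_zero_of_sum_ne_zero hd
  rw [Finset.HasAntidiagonal.mem_antidiagonal] at huv
  have h1 : coeff u p ≠ 0 := fun h => hne (by simp [h])
  have h2 : coeff v q ≠ 0 := fun h => hne (by simp [h])
  have := add_le_add (hp u h1) (hq v h2)
  rwa [← huv, wt_add] at *

lemma Lwt.pow {a b s : ℕ} {p : MvPolynomial (Fin 2) K}
    (hp : Lwt a b s p) (q : ℕ) : Lwt a b (q * s) (p ^ q) := by
  induction q with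
  | zero => intro d hd; simp
  | succ n ih => rw [pow_succ]; simpa [Nat.succ_mul] using ih.mul hp

lemma Lwt.weaken {a b s t : ℕ} {p : MvPolynomial (Fin 2) K}
    (hp : Lwt a b s p) (h : t ≤ s) : Lwt a b t p :=
  fun d hd => le_trans h (hp d hd)

lemma aeval_pair_eq (φt : MvPolynomial (Fin 2) K ≃ₐ[K] MvPolynomial (Fin 2) K)
    (p : MvPolynomial (Fin 2) K) :
    aeval ![φt (X 0), φt (X 1)] p = φt p := by
  have : (aeval ![φt (X 0), φt (X 1)] : MvPolynomial (Fin 2) K →ₐ[K] MvPolynomial (Fin 2) K)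
      = φt.toAlgHom := by
    apply MvPolynomial.algHom_ext
    intro i
    fin_cases i <;> simp
  exact congrArg (fun ψ => ψ p) this

lemma coeff_aeval_pair (f g p : MvPolynomial (Fin 2) K) (μ : Fin 2 →₀ ℕ) :
    coeff μ (aeval ![f, g] p)
      = ∑ d ∈ p.support, coeff d p * coeff μ (f ^ d 0 * g ^ d 1) := by
  conv_lhs => rw [p.as_sum, map_sum, coeff_sum]
  refine Finset.sum_congr rfl fun d _ => ?_
  rw [aeval_monomial]
  have : (d.prod fun i k => (![f, g] : Fin 2 → MvPolynomial (Fin 2) K) i ^ k)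
      = f ^ d 0 * g ^ d 1 := by
    rw [Finsupp.prod_pow]; simp [Fin.prod_univ_two]
  rw [this]
  simp [algebraMap_eq, coeff_C_mul]

lemma constantCoeff_comp (f g : MvPolynomial (Fin 2) K)
    (hf : constantCoeff f = 0) (hg : constantCoeff g = 0) (p : MvPolynomial (Fin 2) K) :
    constantCoeff (aeval ![f, g] p) = constantCoeff p := by
  have : (constantCoeff : MvPolynomial (Fin 2) K →+* K).comp
        ((aeval ![f, g] : MvPolynomial (Fin 2) K →ₐ[K] MvPolynomial (Fin 2) K) :
          MvPolynomial (Fin 2) K →+* MvPolynomial (Fin 2) K)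
      = (constantCoeff : MvPolynomial (Fin 2) K →+* K) := by
    apply MvPolynomial.ringHom_ext
    · intro r; simp
    · intro i; fin_cases i <;> simp [hf, hg]
  exact RingHom.congr_fun this p

section Crux

variable {a b : ℕ} {f g : MvPolynomial (Fin 2) K}

lemma lwt_of_hfq (ha : 0 < a)
    (hfq : ∀ q, b * q < a → coeff (Finsupp.single 1 q) f = 0) : Lwt a b a f := by
  intro d hd
  by_cases h0 : d 0 = 0
  · have hdeq : d = Finsupp.single 1 (d 1) := by
      rw [fin2_decomp d, h0]; simp
    rcases lt_or_ge (b * d 1) a with h | h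
    · exact absurd (hdeq ▸ hfq (d 1) h) hd
    · simp only [wt, h0, Nat.mul_zero, Nat.zero_add]; exact h
  · have : 1 ≤ d 0 := Nat.one_le_iff_ne_zero.mpr h0
    have : a ≤ a * d 0 := Nat.le_mul_of_pos_right a (by omega)
    simp only [wt]; omega

lemma lwt_of_hgc (hb : 0 < b) (hab : b ≤ a) (hgc : constantCoeff g = 0) : Lwt a b b g := by
  intro d hd
  have hdne : d ≠ 0 := by
    rintro rfl
    exact hd (by rw [constantCoeff_eq] at hgc; exact hgc)
  by_cases h0 : d 0 = 0
  · have h1 : d 1 ≠ 0 := by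
      intro h1
      exact hdne (by rw [fin2_decomp d, h0, h1]; simp)
    have : b ≤ b * d 1 := Nat.le_mul_of_pos_right b (by omega)
    simp only [wt]; omega
  · have : a ≤ a * d 0 := Nat.le_mul_of_pos_right a (by omega)
    simp only [wt]; omega


lemma delta_ne [Nontrivial K] (ha : 0 < a) (hb : 0 < b) (hlt : b < a)
    (φt : MvPolynomial (Fin 2) K ≃ₐ[K] MvPolynomial (Fin 2) K)
    (hfq : ∀ q, b * q < a → coeff (Finsupp.single 1 q) (φt (X 0)) = 0)
    (hgc : constantCoeff (φt (X 1)) = 0)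
    (hgs0 : constantCoeff (φt.symm (X 1)) = 0) :
    coeff (Finsupp.single 1 1) (φt (X 1)) ≠ 0 := by
  intro hδ
  set f := φt (X 0) with hf
  set g := φt (X 1) with hg
  set gs := φt.symm (X 1) with hgs
  -- f and g have all weights ≥ b+1
  have hLf : Lwt a b (b + 1) f := (lwt_of_hfq ha hfq).weaken (by omega)
  have hLg : Lwt a b (b + 1) g := by
    intro d hd
    have hdne : d ≠ 0 := by
      rintro rfl
      exact hd (by rw [constantCoeff_eq] at hgc; exact hgc)
    by_cases h0 : d 0 = 0
    · have h1 : d 1 ≠ 0 := by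
        intro h1; exact hdne (by rw [fin2_decomp d, h0, h1]; simp)
      have hd1 : d 1 ≠ 1 := by
        intro h1
        have hdeq : d = Finsupp.single 1 1 := by rw [fin2_decomp d, h0, h1]; simp
        exact hd (hdeq ▸ hδ)
      have : 2 ≤ d 1 := by omega
      have : 2 * b ≤ b * d 1 := by nlinarith
      simp only [wt]; omega
    · have : a ≤ a * d 0 := Nat.le_mul_of_pos_right a (by omega)
      simp only [wt]; omega
  -- the coefficient of v in v = φt gs
  have hkey : aeval ![f, g] gs = X 1 := by
    rw [aeval_pair_eq φt gs, AlgEquiv.apply_symm_apply]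
  have h1 : coeff (Finsupp.single 1 1) (X 1 : MvPolynomial (Fin 2) K) = 1 := by
    classical
    rw [X, coeff_monomial, if_pos rfl]
  rw [← hkey, coeff_aeval_pair] at h1
  have hzero : ∀ d ∈ gs.support,
      coeff d gs * coeff (Finsupp.single 1 1) (f ^ d 0 * g ^ d 1) = 0 := by
    intro d hdmem
    have hd : coeff d gs ≠ 0 := mem_support_iff.mp hdmem
    have hdne : d ≠ 0 := by
      rintro rfl
      exact hd (by rw [constantCoeff_eq] at hgs0; exact hgs0)
    have hsum : 1 ≤ d 0 + d 1 := by
      by_contra hcon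
      push_neg at hcon
      exact hdne (by rw [fin2_decomp d]; have h0 : d 0 = 0 := by omega
                     have h1' : d 1 = 0 := by omega
                     rw [h0, h1']; simp)
    have hL : Lwt a b (d 0 * (b+1) + d 1 * (b+1)) (f ^ d 0 * g ^ d 1) :=
      (hLf.pow (d 0)).mul (hLg.pow (d 1))
    have hco : coeff (Finsupp.single 1 1) (f ^ d 0 * g ^ d 1) = 0 := by
      apply hL.coeff_eq_zero
      have : wt a b (Finsupp.single 1 1) = b := by simp [wt, Finsupp.single_apply]
      rw [this]
      nlinarith
    rw [hco, mul_zero]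
  rw [Finset.sum_eq_zero hzero] at h1
  exact one_ne_zero h1.symm

lemma pow_coeff (hb : 0 < b) (hab : b ≤ a)
    (hgc : constantCoeff g = 0) (hLg : Lwt a b b g) (q : ℕ) :
    coeff (Finsupp.single 1 q) (g ^ q) = (coeff (Finsupp.single 1 1) g) ^ q := by
  induction q with
  | zero => simp
  | succ n ih =>
    rw [pow_succ, coeff_mul]
    rw [Finset.sum_eq_single (Finsupp.single 1 n, Finsupp.single 1 1)]
    · rw [ih, ← pow_succ]
    · rintro ⟨u, v⟩ hmem hne
      rw [Finset.HasAntidiagonal.mem_antidiagonal] at hmem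
      have hu0 : u 0 = 0 ∧ v 0 = 0 := by
        have := DFunLike.congr_fun hmem (0 : Fin 2)
        simp [Finsupp.single_apply] at this
        omega
      have hu : u = Finsupp.single 1 (u 1) := by rw [fin2_decomp u, hu0.1]; simp
      have hv : v = Finsupp.single 1 (v 1) := by rw [fin2_decomp v, hu0.2]; simp
      have huv1 : u 1 + v 1 = n + 1 := by
        have := DFunLike.congr_fun hmem (1 : Fin 2)
        simpa [Finsupp.single_apply] using this
      rcases Nat.lt_trichotomy (v 1) 1 with hv1 | hv1 | hv1
      · -- v 1 = 0 : constant term of g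
        have : v = 0 := by rw [hv]; have : v 1 = 0 := by omega
                           rw [this]; simp
        rw [this]
        have : coeff (0 : Fin 2 →₀ ℕ) g = 0 := by rw [constantCoeff_eq] at hgc; exact hgc
        rw [this, mul_zero]
      · -- v 1 = 1 : this is the distinguished pair
        exfalso
        apply hne
        have hu1 : u 1 = n := by omega
        rw [hu, hv, hu1, hv1]
      · -- v 1 ≥ 2 : u has weight < b*n
        have hun : u 1 < n := by omega
        have : coeff u (g ^ n) = 0 := by
          apply (hLg.pow n).coeff_eq_zero
          have : wt a b u = b * u 1 := by
            rw [hu]; simp [wt, Finsupp.single_apply]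
          rw [this]
          calc b * u 1 < b * n := (Nat.mul_lt_mul_left hb).mpr hun
          _ = n * b := by ring
        rw [this, zero_mul]
    · intro hnot
      exfalso
      apply hnot
      rw [Finset.HasAntidiagonal.mem_antidiagonal, ← Finsupp.single_add]


lemma inverse_good {K : Type*} [Field K] (a b : ℕ) (ha : 0 < a) (hb : 0 < b) (hab : b ≤ a)
    (φt : MvPolynomial (Fin 2) K ≃ₐ[K] MvPolynomial (Fin 2) K)
    (hfq : ∀ q, b * q < a → coeff (Finsupp.single 1 q) (φt (X 0)) = 0)
    (hgc : constantCoeff (φt (X 1)) = 0) :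
    (∀ q, b * q < a → coeff (Finsupp.single 1 q) (φt.symm (X 0)) = 0) ∧
      constantCoeff (φt.symm (X 1)) = 0 := by
  classical
  set f := φt (X 0) with hf
  set g := φt (X 1) with hg
  set fs := φt.symm (X 0) with hfs
  set gs := φt.symm (X 1) with hgs
  have hconst_f : constantCoeff f = 0 := by
    have h0 := hfq 0 (by simpa using ha)
    rw [Finsupp.single_zero] at h0
    rw [constantCoeff_eq]; exact h0
  have hkeyf : aeval ![f, g] fs = X 0 := by
    rw [aeval_pair_eq φt fs, AlgEquiv.apply_symm_apply]
  have hkeyg : aeval ![f, g] gs = X 1 := by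
    rw [aeval_pair_eq φt gs, AlgEquiv.apply_symm_apply]
  have hfs0 : constantCoeff fs = 0 := by
    have := constantCoeff_comp f g hconst_f hgc fs
    rw [hkeyf] at this
    simpa using this.symm
  have hgs0 : constantCoeff gs = 0 := by
    have := constantCoeff_comp f g hconst_f hgc gs
    rw [hkeyg] at this
    simpa using this.symm
  refine ⟨?_, hgs0⟩
  rcases eq_or_lt_of_le hab with heq | hlt
  · -- b = a : only q = 0 is possible
    intro q hq
    have hq0 : q = 0 := by
      by_contra hqn
      have : b ≤ b * q := Nat.le_mul_of_pos_right b (by omega)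
      omega
    subst hq0
    rw [Finsupp.single_zero]
    rw [constantCoeff_eq] at hfs0
    exact hfs0
  · -- b < a
    have hLf : Lwt a b a f := lwt_of_hfq ha hfq
    have hLg : Lwt a b b g := lwt_of_hgc hb hab hgc
    have hδ : coeff (Finsupp.single 1 1) g ≠ 0 := delta_ne ha hb hlt φt hfq hgc hgs0
    intro q
    induction q using Nat.strong_induction_on with
    | _ q IH =>
    intro hq
    have hX : coeff (Finsupp.single 1 q) (X 0 : MvPolynomial (Fin 2) K) = 0 := by
      rw [X, coeff_monomial, if_neg]
      intro hcon
      have := DFunLike.congr_fun hcon (0 : Fin 2)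
      simp [Finsupp.single_apply] at this
    rw [← hkeyf, coeff_aeval_pair] at hX
    rw [Finset.sum_eq_single (Finsupp.single 1 q)] at hX
    · -- hX : coeff (single 1 q) fs * coeff (single 1 q) (f ^ _ * g ^ _) = 0
      have hap0 : (Finsupp.single 1 q : Fin 2 →₀ ℕ) 0 = 0 := by
        simp [Finsupp.single_apply]
      have hap1 : (Finsupp.single 1 q : Fin 2 →₀ ℕ) 1 = q := by simp
      rw [hap0, hap1, pow_zero, one_mul, pow_coeff hb hab hgc hLg q] at hX
      rcases mul_eq_zero.mp hX with h | h
      · exact h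
      · exact absurd h (pow_ne_zero q hδ)
    · intro d hdmem hdne
      have hd : coeff d fs ≠ 0 := mem_support_iff.mp hdmem
      by_cases h0 : d 0 = 0
      · have hdeq : d = Finsupp.single 1 (d 1) := by rw [fin2_decomp d, h0]; simp
        have hd1ne : d 1 ≠ q := fun h => hdne (by rw [hdeq, h])
        have hwtq : wt a b (Finsupp.single 1 q) = b * q := by
          simp [wt, Finsupp.single_apply]
        rcases Nat.lt_trichotomy (d 1) q with hlt1 | heq1 | hgt1
        · rcases lt_or_ge (b * d 1) a with hba | hba
          · -- IH kills the coefficient of fs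
            exact absurd (hdeq ▸ IH (d 1) hlt1 hba) hd
          · -- weight of g ^ d1 too big
            have : coeff (Finsupp.single 1 q) (f ^ d 0 * g ^ d 1) = 0 := by
              apply Lwt.coeff_eq_zero ((hLf.pow (d 0)).mul (hLg.pow (d 1)))
              rw [hwtq, h0]
              have : b * d 1 ≤ d 1 * b := by ring_nf; omega
              omega
            rw [this, mul_zero]
        · exact absurd heq1 hd1ne
        · have : coeff (Finsupp.single 1 q) (f ^ d 0 * g ^ d 1) = 0 := by
            apply Lwt.coeff_eq_zero ((hLf.pow (d 0)).mul (hLg.pow (d 1)))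
            rw [hwtq, h0]
            have h1 : b * q < b * d 1 := (Nat.mul_lt_mul_left hb).mpr hgt1
            have : b * d 1 = d 1 * b := by ring
            omega
          rw [this, mul_zero]
      · have : coeff (Finsupp.single 1 q) (f ^ d 0 * g ^ d 1) = 0 := by
          apply Lwt.coeff_eq_zero ((hLf.pow (d 0)).mul (hLg.pow (d 1)))
          have hwtq : wt a b (Finsupp.single 1 q) = b * q := by
            simp [wt, Finsupp.single_apply]
          rw [hwtq]
          have h1 : a ≤ d 0 * a := Nat.le_mul_of_pos_left a (by omega)
          omega
        rw [this, mul_zero]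
    · intro hnot
      rw [notMem_support_iff.mp hnot, zero_mul]

end Crux



lemma wh_pow {M : Type*} [AddCommMonoid M] {w : Fin 3 → M}
    {p : MvPolynomial (Fin 3) K} {m : M} (hp : p.IsWeightedHomogeneous w m) (n : ℕ) :
    (p ^ n).IsWeightedHomogeneous w (n • m) := by
  induction n with
  | zero => simpa using isWeightedHomogeneous_one K w
  | succ k ih =>
      rw [pow_succ, succ_nsmul]
      exact ih.mul hp

/-- projection of a `Fin 3` exponent to a `Fin 2` exponent (forgetting the `z`-exponent) -/
noncomputable def proj (m : Fin 3 →₀ ℕ) : Fin 2 →₀ ℕ :=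
  Finsupp.single 0 (m 0) + Finsupp.single 1 (m 1)

lemma proj_apply0 (m : Fin 3 →₀ ℕ) : proj m 0 = m 0 := by simp [proj, Finsupp.single_apply]
lemma proj_apply1 (m : Fin 3 →₀ ℕ) : proj m 1 = m 1 := by simp [proj, Finsupp.single_apply]

lemma weight3_apply {M : Type*} [AddCommMonoid M] (w : Fin 3 → M) (m : Fin 3 →₀ ℕ) :
    Finsupp.weight w m = m 0 • w 0 + m 1 • w 1 + m 2 • w 2 := by
  rw [Finsupp.weight_apply, Finsupp.sum_fintype]
  · rw [Fin.sum_univ_three]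
  · intro i; simp

lemma weight2_apply {M : Type*} [AddCommMonoid M] (w : Fin 2 → M) (m : Fin 2 →₀ ℕ) :
    Finsupp.weight w m = m 0 • w 0 + m 1 • w 1 := by
  rw [Finsupp.weight_apply, Finsupp.sum_fintype]
  · rw [Fin.sum_univ_two]
  · intro i; simp

lemma restrict_monomial (m : Fin 3 →₀ ℕ) (r : K) :
    restrict K (monomial m r) = monomial (proj m) r := by
  rw [restrict, aeval_monomial]
  have : (m.prod fun i k => (![X 0, X 1, 1] : Fin 3 → MvPolynomial (Fin 2) K) i ^ k)
      = (X 0 : MvPolynomial (Fin 2) K) ^ m 0 * X 1 ^ m 1 := by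
    rw [Finsupp.prod_pow, Fin.prod_univ_three]
    simp
  rw [this, algebraMap_eq, X_pow_eq_monomial, X_pow_eq_monomial, monomial_mul,
    C_mul_monomial, proj]
  congr 1
  ring

lemma restrict_eq_sum (H : MvPolynomial (Fin 3) K) :
    restrict K H = ∑ m ∈ H.support, monomial (proj m) (coeff m H) := by
  conv_lhs => rw [H.as_sum, map_sum]
  exact Finset.sum_congr rfl fun m _ => restrict_monomial m _


section Three

variable (a b c : ℕ)

/-- the `ℤ`-weights for `K[x,y,z]` -/
def w3 : Fin 3 → ℤ := ![(a : ℤ), (b : ℤ), -(c : ℤ)]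

lemma weight_w3 (m : Fin 3 →₀ ℕ) :
    Finsupp.weight (w3 a b c) m = (a : ℤ) * m 0 + (b : ℤ) * m 1 - (c : ℤ) * m 2 := by
  rw [weight3_apply]
  simp only [w3, Matrix.cons_val_zero, Matrix.cons_val_one, Matrix.head_cons, nsmul_eq_mul]
  have h2 : ((![(a : ℤ), (b : ℤ), -(c : ℤ)] : Fin 3 → ℤ) 2) = -(c : ℤ) := rfl
  rw [h2]
  push_cast
  ring

/-- if the coefficient of `μ` in `restrict H` is nonzero, some exponent of `H` projects to `μ` -/
lemma exists_of_coeff_restrict_ne_zero {H : MvPolynomial (Fin 3) K} {μ : Fin 2 →₀ ℕ}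
    (h : coeff μ (restrict K H) ≠ 0) : ∃ m ∈ H.support, proj m = μ := by
  classical
  rw [restrict_eq_sum, coeff_sum] at h
  obtain ⟨m, hm, hne⟩ := Finset.exists_ne_zero_of_sum_ne_zero h
  refine ⟨m, hm, ?_⟩
  rw [coeff_monomial] at hne
  by_contra hc
  rw [if_neg hc] at hne
  exact hne rfl

/-- restriction is injective on each homogeneous component -/
lemma coeff_restrict_of_homog (hc : 0 < c) {e : ℤ} {H : MvPolynomial (Fin 3) K}
    (hH : H.IsWeightedHomogeneous (w3 a b c) e) {m : Fin 3 →₀ ℕ}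
    (hm : Finsupp.weight (w3 a b c) m = e) :
    coeff (proj m) (restrict K H) = coeff m H := by
  classical
  rw [restrict_eq_sum, coeff_sum]
  rw [Finset.sum_eq_single m]
  · rw [coeff_monomial, if_pos rfl]
  · intro m' hm' hne
    rw [coeff_monomial, if_neg]
    intro hp
    apply hne
    have h0 : m' 0 = m 0 := by rw [← proj_apply0 m', ← proj_apply0 m, hp]
    have h1 : m' 1 = m 1 := by rw [← proj_apply1 m', ← proj_apply1 m, hp]
    have hw' : Finsupp.weight (w3 a b c) m' = e := hH (mem_support_iff.mp hm')
    rw [weight_w3] at hw' hm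
    have h2 : (c : ℤ) * m' 2 = (c : ℤ) * m 2 := by
      rw [h0, h1] at hw'
      omega
    have h2' : m' 2 = m 2 := by
      have hc' : (c : ℤ) ≠ 0 := by exact_mod_cast hc.ne'
      exact_mod_cast mul_left_cancel₀ hc' h2
    ext i
    fin_cases i <;> assumption
  · intro hnot
    rw [coeff_monomial, if_pos rfl, notMem_support_iff.mp hnot]

/-- two homogeneous polynomials of the same degree with the same restriction agree -/
lemma homog_restrict_inj (hc : 0 < c) {e : ℤ} {H₁ H₂ : MvPolynomial (Fin 3) K}
    (h₁ : H₁.IsWeightedHomogeneous (w3 a b c) e) (h₂ : H₂.IsWeightedHomogeneous (w3 a b c) e)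
    (h : restrict K H₁ = restrict K H₂) : H₁ = H₂ := by
  ext m
  by_cases hw : Finsupp.weight (w3 a b c) m = e
  · rw [← coeff_restrict_of_homog a b c hc h₁ hw, ← coeff_restrict_of_homog a b c hc h₂ hw, h]
  · have e1 : coeff m H₁ = 0 := by
      by_contra hcon; exact hw (h₁ hcon)
    have e2 : coeff m H₂ = 0 := by
      by_contra hcon; exact hw (h₂ hcon)
    rw [e1, e2]

/-- the canonical homogeneous lift of a polynomial in `u, v` -/
noncomputable def liftp (e : ℕ) (p : MvPolynomial (Fin 2) K) : MvPolynomial (Fin 3) K :=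
  ∑ d ∈ p.support,
    monomial (Finsupp.single 0 (d 0) + Finsupp.single 1 (d 1)
      + Finsupp.single 2 ((a * d 0 + b * d 1 - e) / c)) (coeff d p)

lemma restrict_liftp (e : ℕ) (p : MvPolynomial (Fin 2) K) :
    restrict K (liftp a b c e p) = p := by
  rw [liftp, map_sum]
  have : ∀ d ∈ p.support,
      restrict K (monomial (Finsupp.single 0 (d 0) + Finsupp.single 1 (d 1)
        + Finsupp.single 2 ((a * d 0 + b * d 1 - e) / c)) (coeff d p))
      = monomial d (coeff d p) := by
    intro d _
    rw [restrict_monomial]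
    congr 1
    have h0 : (Finsupp.single 0 (d 0) + Finsupp.single 1 (d 1)
        + Finsupp.single 2 ((a * d 0 + b * d 1 - e) / c) : Fin 3 →₀ ℕ) 0 = d 0 := by
      simp [Finsupp.single_apply]
    have h1 : (Finsupp.single 0 (d 0) + Finsupp.single 1 (d 1)
        + Finsupp.single 2 ((a * d 0 + b * d 1 - e) / c) : Fin 3 →₀ ℕ) 1 = d 1 := by
      simp [Finsupp.single_apply]
    rw [proj, h0, h1, ← fin2_decomp]
  rw [Finset.sum_congr rfl this, ← as_sum]

lemma liftp_isHomog (hc : 0 < c) (e : ℕ) (p : MvPolynomial (Fin 2) K)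
    (hp : ∀ d, coeff d p ≠ 0 → e ≤ wt a b d ∧ c ∣ (wt a b d - e)) :
    (liftp a b c e p).IsWeightedHomogeneous (w3 a b c) (e : ℤ) := by
  apply IsWeightedHomogeneous.sum
  intro d hd
  apply isWeightedHomogeneous_monomial
  obtain ⟨hle, hdvd⟩ := hp d (mem_support_iff.mp hd)
  rw [weight_w3]
  have h0 : (Finsupp.single 0 (d 0) + Finsupp.single 1 (d 1)
      + Finsupp.single 2 ((a * d 0 + b * d 1 - e) / c) : Fin 3 →₀ ℕ) 0 = d 0 := by
    simp [Finsupp.single_apply]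
  have h1 : (Finsupp.single 0 (d 0) + Finsupp.single 1 (d 1)
      + Finsupp.single 2 ((a * d 0 + b * d 1 - e) / c) : Fin 3 →₀ ℕ) 1 = d 1 := by
    simp [Finsupp.single_apply]
  have h2 : (Finsupp.single 0 (d 0) + Finsupp.single 1 (d 1)
      + Finsupp.single 2 ((a * d 0 + b * d 1 - e) / c) : Fin 3 →₀ ℕ) 2 = (wt a b d - e) / c := by
    simp [Finsupp.single_apply, wt]
  rw [h0, h1, h2]
  have hmul : c * ((wt a b d - e) / c) = wt a b d - e := Nat.mul_div_cancel' hdvd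
  have hwt : wt a b d = a * d 0 + b * d 1 := rfl
  have : (c : ℤ) * ((wt a b d - e) / c : ℕ) = (wt a b d : ℤ) - e := by
    have hz : ((c * ((wt a b d - e) / c) : ℕ) : ℤ) = ((wt a b d - e : ℕ) : ℤ) := by
      exact_mod_cast congrArg (Nat.cast : ℕ → ℤ) hmul
    rw [Nat.cast_sub hle] at hz
    push_cast at hz ⊢
    linarith
  rw [this, hwt]
  push_cast
  ring

/-- substituting homogeneous polynomials of matching degrees preserves homogeneity -/
lemma aeval_homog (F G : MvPolynomial (Fin 3) K)
    (hF : F.IsWeightedHomogeneous (w3 a b c) (a : ℤ))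
    (hG : G.IsWeightedHomogeneous (w3 a b c) (b : ℤ))
    {d : ℤ} {p : MvPolynomial (Fin 3) K} (hp : p.IsWeightedHomogeneous (w3 a b c) d) :
    (aeval ![F, G, X 2] p).IsWeightedHomogeneous (w3 a b c) d := by
  conv_lhs => rw [p.as_sum]
  rw [map_sum]
  apply IsWeightedHomogeneous.sum
  intro m hm
  rw [aeval_monomial]
  have hprod : (m.prod fun i k => (![F, G, X 2] : Fin 3 → MvPolynomial (Fin 3) K) i ^ k)
      = F ^ m 0 * G ^ m 1 * (X 2) ^ m 2 := by
    rw [Finsupp.prod_pow, Fin.prod_univ_three]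
    congr
  rw [hprod, algebraMap_eq]
  have hX2 : (X 2 : MvPolynomial (Fin 3) K).IsWeightedHomogeneous (w3 a b c) (-(c : ℤ)) := by
    have := isWeightedHomogeneous_X K (w3 a b c) 2
    have h2 : (w3 a b c) 2 = -(c : ℤ) := rfl
    rwa [h2] at this
  have hh := (isWeightedHomogeneous_C (w3 a b c) (coeff m p)).mul
    ((((wh_pow hF (m 0)).mul (wh_pow hG (m 1)))).mul (wh_pow hX2 (m 2)))
  have hdeg : (0 : ℤ) + (m 0 • (a : ℤ) + m 1 • (b : ℤ) + m 2 • (-(c : ℤ))) = d := by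
    have := hp (mem_support_iff.mp hm)
    rw [weight_w3] at this
    simp only [nsmul_eq_mul] at *
    push_cast at this ⊢
    linarith
  rw [← hdeg]
  convert hh using 2

end Three




lemma symm_graded {M : Type*} [AddCommMonoid M] [Fintype M] [DecidableEq M]
    (w : Fin 2 → M) (φ : MvPolynomial (Fin 2) K ≃ₐ[K] MvPolynomial (Fin 2) K)
    (h : ∀ (m : M) (p : MvPolynomial (Fin 2) K),
      p.IsWeightedHomogeneous w m → (φ p).IsWeightedHomogeneous w m)
    (d : M) (p : MvPolynomial (Fin 2) K) (hp : p.IsWeightedHomogeneous w d) :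
    (φ.symm p).IsWeightedHomogeneous w d := by
  set q := φ.symm p with hq
  have hdecomp : q = ∑ e : M, weightedHomogeneousComponent w e q := by
    rw [← finsum_eq_sum_of_fintype (fun e => weightedHomogeneousComponent w e q),
      sum_weightedHomogeneousComponent]
  have hpq : φ q = p := φ.apply_symm_apply p
  have hsum : p = ∑ e : M, φ (weightedHomogeneousComponent w e q) := by
    rw [← hpq]
    conv_lhs => rw [hdecomp]
    rw [map_sum]
  have hmain : p = φ (weightedHomogeneousComponent w d q) := by
    have h1 : weightedHomogeneousComponent w d p = p :=
      hp.weightedHomogeneousComponent_same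
    conv_lhs => rw [← h1, hsum, map_sum]
    rw [Finset.sum_eq_single d]
    · exact (h d _ (weightedHomogeneousComponent_isWeightedHomogeneous d q
        )).weightedHomogeneousComponent_same
    · intro e _ hne
      exact (h e _ (weightedHomogeneousComponent_isWeightedHomogeneous e q
        )).weightedHomogeneousComponent_ne d hne.symm
    · intro hd; exact absurd (Finset.mem_univ d) hd
  have hfinal : q = weightedHomogeneousComponent w d q := by
    apply φ.injective
    rw [hpq, ← hmain]
  show IsWeightedHomogeneous w q d
  rw [hfinal]
  exact weightedHomogeneousComponent_isWeightedHomogeneous d _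


lemma dvd_of_homog {a b c : ℕ} {e : ℕ} {p : MvPolynomial (Fin 2) K}
    (hp : p.IsWeightedHomogeneous ![(a : ZMod c), (b : ZMod c)] ((e : ℕ) : ZMod c))
    {d : Fin 2 →₀ ℕ} (hd : coeff d p ≠ 0) (hle : e ≤ wt a b d) :
    c ∣ (wt a b d - e) := by
  have hw := hp hd
  rw [weight2_apply] at hw
  have h0 : (![(a : ZMod c), (b : ZMod c)] : Fin 2 → ZMod c) 0 = (a : ZMod c) := rfl
  have h1 : (![(a : ZMod c), (b : ZMod c)] : Fin 2 → ZMod c) 1 = (b : ZMod c) := rfl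
  rw [h0, h1] at hw
  have hcast : ((wt a b d : ℕ) : ZMod c) = ((e : ℕ) : ZMod c) := by
    rw [← hw, wt]
    push_cast
    ring
  have := (ZMod.natCast_eq_natCast_iff _ _ _).mp hcast
  exact (Nat.modEq_iff_dvd' hle).mp this.symm


end NoLiftAux


/-- Construction of the graded lift, given that the obstructions vanish. -/
lemma build_lift {K : Type*} [Field K]
    (a b c : ℕ) (ha : 0 < a) (hb : 0 < b) (hc : 0 < c) (hab : b ≤ a)
    (φt : MvPolynomial (Fin 2) K ≃ₐ[K] MvPolynomial (Fin 2) K)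
    (hφt : IsGraded2 ![(a : ZMod c), (b : ZMod c)] φt)
    (hfq : ∀ q, b * q < a → coeff (Finsupp.single 1 q) (φt (X 0)) = 0)
    (hgc : constantCoeff (φt (X 1)) = 0) :
    ∃ φ : MvPolynomial (Fin 3) K ≃ₐ[K] MvPolynomial (Fin 3) K,
        IsGraded3 ![(a : ℤ), (b : ℤ), -(c : ℤ)] φ ∧ φ (X 2) = X 2 ∧
        restrict K (φ (X 0)) = φt (X 0) ∧ restrict K (φ (X 1)) = φt (X 1) := by
  classical
  haveI : NeZero c := ⟨hc.ne'⟩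
  set f := φt (X 0) with hfdef
  set g := φt (X 1) with hgdef
  set fs := φt.symm (X 0) with hfsdef
  set gs := φt.symm (X 1) with hgsdef
  -- the inverse automorphism satisfies the same support conditions
  obtain ⟨hfsq, hgs0⟩ := NoLiftAux.inverse_good a b ha hb hab φt hfq hgc
  -- homogeneity of the four polynomials
  have hxhom : (X 0 : MvPolynomial (Fin 2) K).IsWeightedHomogeneous
      ![(a : ZMod c), (b : ZMod c)] ((a : ℕ) : ZMod c) := by
    have := isWeightedHomogeneous_X K ![(a : ZMod c), (b : ZMod c)] 0
    simpa using this
  have hyhom : (X 1 : MvPolynomial (Fin 2) K).IsWeightedHomogeneous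
      ![(a : ZMod c), (b : ZMod c)] ((b : ℕ) : ZMod c) := by
    have := isWeightedHomogeneous_X K ![(a : ZMod c), (b : ZMod c)] 1
    simpa using this
  have hfhom : f.IsWeightedHomogeneous ![(a : ZMod c), (b : ZMod c)] ((a : ℕ) : ZMod c) :=
    hφt _ _ hxhom
  have hghom : g.IsWeightedHomogeneous ![(a : ZMod c), (b : ZMod c)] ((b : ℕ) : ZMod c) :=
    hφt _ _ hyhom
  have hfshom : fs.IsWeightedHomogeneous ![(a : ZMod c), (b : ZMod c)] ((a : ℕ) : ZMod c) :=
    NoLiftAux.symm_graded _ φt (fun m p hp => hφt m p hp) _ _ hxhom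
  have hgshom : gs.IsWeightedHomogeneous ![(a : ZMod c), (b : ZMod c)] ((b : ℕ) : ZMod c) :=
    NoLiftAux.symm_graded _ φt (fun m p hp => hφt m p hp) _ _ hyhom
  -- the low-weight bounds
  have hLf : NoLiftAux.Lwt a b a f := NoLiftAux.lwt_of_hfq ha hfq
  have hLg : NoLiftAux.Lwt a b b g := NoLiftAux.lwt_of_hgc hb hab hgc
  have hLfs : NoLiftAux.Lwt a b a fs := NoLiftAux.lwt_of_hfq ha hfsq
  have hLgs : NoLiftAux.Lwt a b b gs := NoLiftAux.lwt_of_hgc hb hab hgs0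
  -- liftability data
  have hliftf : ∀ d, coeff d f ≠ 0 → a ≤ NoLiftAux.wt a b d ∧ c ∣ (NoLiftAux.wt a b d - a) :=
    fun d hd => ⟨hLf d hd, NoLiftAux.dvd_of_homog hfhom hd (hLf d hd)⟩
  have hliftg : ∀ d, coeff d g ≠ 0 → b ≤ NoLiftAux.wt a b d ∧ c ∣ (NoLiftAux.wt a b d - b) :=
    fun d hd => ⟨hLg d hd, NoLiftAux.dvd_of_homog hghom hd (hLg d hd)⟩
  have hliftfs : ∀ d, coeff d fs ≠ 0 → a ≤ NoLiftAux.wt a b d ∧ c ∣ (NoLiftAux.wt a b d - a) :=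
    fun d hd => ⟨hLfs d hd, NoLiftAux.dvd_of_homog hfshom hd (hLfs d hd)⟩
  have hliftgs : ∀ d, coeff d gs ≠ 0 → b ≤ NoLiftAux.wt a b d ∧ c ∣ (NoLiftAux.wt a b d - b) :=
    fun d hd => ⟨hLgs d hd, NoLiftAux.dvd_of_homog hgshom hd (hLgs d hd)⟩
  -- the lifted polynomials
  set F := NoLiftAux.liftp a b c a f with hFdef
  set G := NoLiftAux.liftp a b c b g with hGdef
  set Fs := NoLiftAux.liftp a b c a fs with hFsdef
  set Gs := NoLiftAux.liftp a b c b gs with hGsdef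
  have hFhom : F.IsWeightedHomogeneous (NoLiftAux.w3 a b c) ((a : ℕ) : ℤ) :=
    NoLiftAux.liftp_isHomog a b c hc a f hliftf
  have hGhom : G.IsWeightedHomogeneous (NoLiftAux.w3 a b c) ((b : ℕ) : ℤ) :=
    NoLiftAux.liftp_isHomog a b c hc b g hliftg
  have hFshom : Fs.IsWeightedHomogeneous (NoLiftAux.w3 a b c) ((a : ℕ) : ℤ) :=
    NoLiftAux.liftp_isHomog a b c hc a fs hliftfs
  have hGshom : Gs.IsWeightedHomogeneous (NoLiftAux.w3 a b c) ((b : ℕ) : ℤ) :=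
    NoLiftAux.liftp_isHomog a b c hc b gs hliftgs
  have hresF : restrict K F = f := NoLiftAux.restrict_liftp a b c a f
  have hresG : restrict K G = g := NoLiftAux.restrict_liftp a b c b g
  have hresFs : restrict K Fs = fs := NoLiftAux.restrict_liftp a b c a fs
  have hresGs : restrict K Gs = gs := NoLiftAux.restrict_liftp a b c b gs
  -- the two algebra endomorphisms
  set σ := (aeval ![F, G, X 2] : MvPolynomial (Fin 3) K →ₐ[K] MvPolynomial (Fin 3) K) with hσdef
  set τ := (aeval ![Fs, Gs, X 2] : MvPolynomial (Fin 3) K →ₐ[K] MvPolynomial (Fin 3) K) with hτdef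
  have hres3X0 : restrict K (X 0 : MvPolynomial (Fin 3) K) = X 0 := by
    simp [restrict]
  have hres3X1 : restrict K (X 1 : MvPolynomial (Fin 3) K) = X 1 := by
    simp [restrict]
  have hres3X2 : restrict K (X 2 : MvPolynomial (Fin 3) K) = 1 := by
    simp [restrict]
  have hσX0 : σ (X 0) = F := by simp [hσdef]
  have hσX1 : σ (X 1) = G := by simp [hσdef]
  have hσX2 : σ (X 2) = X 2 := by simp [hσdef]
  have hτX0 : τ (X 0) = Fs := by simp [hτdef]
  have hτX1 : τ (X 1) = Gs := by simp [hτdef]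
  have hτX2 : τ (X 2) = X 2 := by simp [hτdef]
  -- restriction compatibility
  have hcompσ : ∀ p, restrict K (σ p) = φt (restrict K p) := by
    have heq : (restrict K).comp σ = (φt.toAlgHom.comp (restrict K)) := by
      apply MvPolynomial.algHom_ext
      intro i
      fin_cases i
      · show restrict K (σ (X 0)) = φt (restrict K (X 0))
        rw [hσX0, hresF, hres3X0, hfdef]
      · show restrict K (σ (X 1)) = φt (restrict K (X 1))
        rw [hσX1, hresG, hres3X1, hgdef]
      · show restrict K (σ (X 2)) = φt (restrict K (X 2))
        rw [hσX2, hres3X2]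
        simp
    intro p
    exact AlgHom.congr_fun heq p
  have hcompτ : ∀ p, restrict K (τ p) = φt.symm (restrict K p) := by
    have heq : (restrict K).comp τ = (φt.symm.toAlgHom.comp (restrict K)) := by
      apply MvPolynomial.algHom_ext
      intro i
      fin_cases i
      · show restrict K (τ (X 0)) = φt.symm (restrict K (X 0))
        rw [hτX0, hresFs, hres3X0, hfsdef]
      · show restrict K (τ (X 1)) = φt.symm (restrict K (X 1))
        rw [hτX1, hresGs, hres3X1, hgsdef]
      · show restrict K (τ (X 2)) = φt.symm (restrict K (X 2))
        rw [hτX2, hres3X2]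
        simp
    intro p
    exact AlgHom.congr_fun heq p
  -- homogeneity of X 0, X 1 on the three-variable side
  have hx3 : (X 0 : MvPolynomial (Fin 3) K).IsWeightedHomogeneous
      (NoLiftAux.w3 a b c) ((a : ℕ) : ℤ) := by
    have := isWeightedHomogeneous_X K (NoLiftAux.w3 a b c) 0
    simpa [NoLiftAux.w3] using this
  have hy3 : (X 1 : MvPolynomial (Fin 3) K).IsWeightedHomogeneous
      (NoLiftAux.w3 a b c) ((b : ℕ) : ℤ) := by
    have := isWeightedHomogeneous_X K (NoLiftAux.w3 a b c) 1
    simpa [NoLiftAux.w3] using this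
  -- σ ∘ τ = id and τ ∘ σ = id
  have hστ : σ.comp τ = AlgHom.id K (MvPolynomial (Fin 3) K) := by
    apply MvPolynomial.algHom_ext
    intro i
    fin_cases i
    · show σ (τ (X 0)) = X 0
      rw [hτX0]
      apply NoLiftAux.homog_restrict_inj a b c hc
        (NoLiftAux.aeval_homog a b c F G hFhom hGhom hFshom) hx3
      rw [hcompσ Fs, hresFs, hres3X0, hfsdef, AlgEquiv.apply_symm_apply]
    · show σ (τ (X 1)) = X 1
      rw [hτX1]
      apply NoLiftAux.homog_restrict_inj a b c hc
        (NoLiftAux.aeval_homog a b c F G hFhom hGhom hGshom) hy3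
      rw [hcompσ Gs, hresGs, hres3X1, hgsdef, AlgEquiv.apply_symm_apply]
    · show σ (τ (X 2)) = X 2
      rw [hτX2, hσX2]
  have hτσ : τ.comp σ = AlgHom.id K (MvPolynomial (Fin 3) K) := by
    apply MvPolynomial.algHom_ext
    intro i
    fin_cases i
    · show τ (σ (X 0)) = X 0
      rw [hσX0]
      apply NoLiftAux.homog_restrict_inj a b c hc
        (NoLiftAux.aeval_homog a b c Fs Gs hFshom hGshom hFhom) hx3
      rw [hcompτ F, hresF, hres3X0, hfdef, AlgEquiv.symm_apply_apply]
    · show τ (σ (X 1)) = X 1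
      rw [hσX1]
      apply NoLiftAux.homog_restrict_inj a b c hc
        (NoLiftAux.aeval_homog a b c Fs Gs hFshom hGshom hGhom) hy3
      rw [hcompτ G, hresG, hres3X1, hgdef, AlgEquiv.symm_apply_apply]
    · show τ (σ (X 2)) = X 2
      rw [hσX2, hτX2]
  refine ⟨AlgEquiv.ofAlgHom σ τ hστ hτσ, ?_, ?_, ?_, ?_⟩
  · intro d p hp
    show IsWeightedHomogeneous _ (σ p) d
    exact NoLiftAux.aeval_homog a b c F G hFhom hGhom hp
  · show σ (X 2) = X 2
    exact hσX2
  · show restrict K (σ (X 0)) = φt (X 0)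
    rw [hσX0, hresF]
  · show restrict K (σ (X 1)) = φt (X 1)
    rw [hσX1, hresG]


/-- Let `a ≥ b > 0`, `c > 0` with `gcd(a,c) = gcd(b,c) = 1`, let `Γ` be the
`ℤ`-grading of `K[x,y,z]` with `deg x = a`, `deg y = b`, `deg z = -c`, and let `Γ̃` be
the `ℤ/cℤ`-grading of `K[u,v]` with `deg u = a mod c`, `deg v = b mod c`. Let
`φ̃ = (f̃, g̃)` be a `Γ̃`-graded automorphism of `K[u,v]`. Then `φ̃` admits no lift to a
`Γ`-graded automorphism of `K[x,y,z]` fixing `z` if and only if `f̃` contains a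
monomial `v^q` with `bq < a`, or `g̃` has nonzero constant term.
Here `x = X 0`, `y = X 1`, `z = X 2`, `u = X 0`, `v = X 1`. -/
theorem no_lift_iff_low_monomial_or_constant_term
    {K : Type*} [Field K] [IsAlgClosed K] [CharZero K]
    (a b c : ℕ) (ha : 0 < a) (hb : 0 < b) (hc : 0 < c) (hab : b ≤ a)
    (hac : Nat.gcd a c = 1) (hbc : Nat.gcd b c = 1)
    (φt : MvPolynomial (Fin 2) K ≃ₐ[K] MvPolynomial (Fin 2) K)
    (hφt : IsGraded2 ![(a : ZMod c), (b : ZMod c)] φt) :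
    (¬ ∃ φ : MvPolynomial (Fin 3) K ≃ₐ[K] MvPolynomial (Fin 3) K,
        IsGraded3 ![(a : ℤ), (b : ℤ), -(c : ℤ)] φ ∧ φ (X 2) = X 2 ∧
        restrict K (φ (X 0)) = φt (X 0) ∧ restrict K (φ (X 1)) = φt (X 1)) ↔
      ((∃ q : ℕ, (φt (X 0)).coeff (Finsupp.single 1 q) ≠ 0 ∧ b * q < a) ∨
        constantCoeff (φt (X 1)) ≠ 0) := by
  classical
  haveI : NeZero c := ⟨hc.ne'⟩
  constructor
  · -- no lift ⇒ bad monomial or constant term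
    intro hno
    by_contra hbad
    push_neg at hbad
    obtain ⟨hbad1, hgc⟩ := hbad
    have hfq : ∀ q, b * q < a → coeff (Finsupp.single 1 q) (φt (X 0)) = 0 := by
      intro q hq
      by_contra hne
      exact absurd hq (not_lt.mpr (hbad1 q hne))
    exact hno (build_lift a b c ha hb hc hab φt hφt hfq hgc)
  · -- bad ⇒ no lift
    intro hbad
    rintro ⟨φ, hgr, hz, hr0, hr1⟩
    rcases hbad with ⟨q, hcq, hlt⟩ | hconst
    · -- bad monomial v^q in f̃
      have hx : (X 0 : MvPolynomial (Fin 3) K).IsWeightedHomogeneous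
          ![(a : ℤ), (b : ℤ), -(c : ℤ)] ((a : ℕ) : ℤ) := by
        have := isWeightedHomogeneous_X K ![(a : ℤ), (b : ℤ), -(c : ℤ)] 0
        simpa using this
      have hhom := hgr _ _ hx
      have hcr : coeff (Finsupp.single 1 q) (restrict K (φ (X 0))) ≠ 0 := by
        rw [hr0]; exact hcq
      obtain ⟨m, hm, hproj⟩ := NoLiftAux.exists_of_coeff_restrict_ne_zero hcr
      have hm0 : m 0 = 0 := by
        rw [← NoLiftAux.proj_apply0 m, hproj]
        simp [Finsupp.single_apply]
      have hm1 : m 1 = q := by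
        rw [← NoLiftAux.proj_apply1 m, hproj]
        simp
      have hw : Finsupp.weight (NoLiftAux.w3 a b c) m = ((a : ℕ) : ℤ) :=
        hhom (mem_support_iff.mp hm)
      rw [NoLiftAux.weight_w3, hm0, hm1] at hw
      have hbq : ((b : ℤ) * q) < (a : ℤ) := by exact_mod_cast hlt
      have hpos : (0 : ℤ) ≤ (c : ℤ) * (m 2) := by positivity
      push_cast at hw
      linarith
    · -- nonzero constant term in g̃
      have hx : (X 1 : MvPolynomial (Fin 3) K).IsWeightedHomogeneous
          ![(a : ℤ), (b : ℤ), -(c : ℤ)] ((b : ℕ) : ℤ) := by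
        have := isWeightedHomogeneous_X K ![(a : ℤ), (b : ℤ), -(c : ℤ)] 1
        simpa using this
      have hhom := hgr _ _ hx
      have hcr : coeff (0 : Fin 2 →₀ ℕ) (restrict K (φ (X 1))) ≠ 0 := by
        rw [hr1, ← constantCoeff_eq]
        exact hconst
      obtain ⟨m, hm, hproj⟩ := NoLiftAux.exists_of_coeff_restrict_ne_zero hcr
      have hm0 : m 0 = 0 := by
        rw [← NoLiftAux.proj_apply0 m, hproj]; simp
      have hm1 : m 1 = 0 := by
        rw [← NoLiftAux.proj_apply1 m, hproj]; simp
      have hw : Finsupp.weight (NoLiftAux.w3 a b c) m = ((b : ℕ) : ℤ) :=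
        hhom (mem_support_iff.mp hm)
      rw [NoLiftAux.weight_w3, hm0, hm1] at hw
      have hpos : (0 : ℤ) ≤ (c : ℤ) * (m 2) := by positivity
      have hbpos : (0 : ℤ) < (b : ℤ) := by exact_mod_cast hb
      push_cast at hw
      linarith
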